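/- arXiv:2102.08975 — 2 statements merged into one kernel-verified Lean document; each statement's English description precedes it below -/
import Mathlib

section
/- Define Γ_t(a) = π^e(a∣X_t) 1[A_t = a] (Y_t(a) − f*(a,X_t)) / ᾱ(a∣X_t) + π^e(a∣X_t) f*(a,X_t) and Z_t = Σ_{a=1}^K Γ_t(a) − R(π^e), where ᾱ : 𝒜 × 𝒳 → (0,1) is any measurable function with |π^e(a∣x)/ᾱ(a∣x)| bounded. Then for every t, E[Z_t ∣ Ω_{t-1}] = 0 almost surely; that is, {Z_t}_{t≥1} is a martingale difference sequence with respect to the filtration {Ω_t}. -/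
open MeasureTheory ProbabilityTheory Filter
open scoped NNReal ENNReal Topology

noncomputable section

theorem score_is_martingale_difference_sequence
    {Ω : Type*} [mΩ : MeasurableSpace Ω] (μ : Measure Ω) [IsProbabilityMeasure μ]
    {𝒳 : Type*} [mX : MeasurableSpace 𝒳]
    {K : ℕ} (hK : 0 < K)
    (ℱ : MeasureTheory.Filtration ℕ mΩ)
    (X : ℕ → Ω → 𝒳) (A : ℕ → Ω → Fin K) (Y : ℕ → Fin K → Ω → ℝ)
    (ν : Measure 𝒳) [IsProbabilityMeasure ν]
    (πpol : ℕ → Fin K → 𝒳 → Ω → ℝ)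
    (πe : Fin K → 𝒳 → ℝ) (fstar : Fin K → 𝒳 → ℝ)
    (Rval : ℝ)
    -- measurability and adaptedness of the data-generating process
    (hXmeas : ∀ t, Measurable (X t))
    (hAmeas : ∀ t, Measurable (A t))
    (hYmeas : ∀ t a, Measurable (Y t a))
    (hXadapt : ∀ t, Measurable[ℱ (t+1)] (X t))
    (hAadapt : ∀ t, Measurable[ℱ (t+1)] (A t))
    (hYadapt : ∀ t a, Measurable[ℱ (t+1)] (Y t a))
    (hπemeas : ∀ a, Measurable (πe a))
    (hfstarmeas : ∀ a, Measurable (fstar a))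
    (Cπe : ℝ) (hπebdd : ∀ a x, |πe a x| ≤ Cπe)
    -- the covariates are i.i.d. with law ν and independent of the past
    (hXlaw : ∀ t, μ.map (X t) = ν)
    (hXindep : ∀ t, ProbabilityTheory.Indep (MeasurableSpace.comap (X t) mX) (ℱ t) μ)
    -- the logging policy is a function of the history only
    (hπpolmeas : ∀ t a x, Measurable[ℱ t] (πpol t a x))
    (hπpoljm : ∀ t a, Measurable fun p : 𝒳 × Ω => πpol t a p.1 p.2)
    (hπpolrange : ∀ t a x ω, πpol t a x ω ∈ Set.Icc (0:ℝ) 1)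
    -- P(A_t = a | X_t, Ω_{t-1}) = π_t(a | X_t, Ω_{t-1})
    (hpolicy : ∀ t a,
      μ[(fun ω => if A t ω = a then (1:ℝ) else 0) | ℱ t ⊔ MeasurableSpace.comap (X t) mX]
        =ᵐ[μ] fun ω => πpol t a (X t ω) ω)
    -- conditional mean of the potential outcomes, time-invariant
    (hfstarcond : ∀ t a,
      μ[Y t a | MeasurableSpace.comap (X t) mX] =ᵐ[μ] fun ω => fstar a (X t ω))
    -- unconfoundedness: A_t ⫫ Y_t(a) given (X_t, Ω_{t-1})
    (hunconf : ∀ t a,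
      μ[(fun ω => (if A t ω = a then (1:ℝ) else 0) * (Y t a ω - fstar a (X t ω)))
          | ℱ t ⊔ MeasurableSpace.comap (X t) mX] =ᵐ[μ] fun _ => 0)
    -- the mean outcome R(π^e) = E[Σ_a π^e(a|X) Y(a)]
    (hR : Rval = ∫ x, (∑ a, πe a x * fstar a x) ∂ν)
    -- Assumption 1: bounded potential outcomes
    (C_Y : ℝ) (hYbdd : ∀ t a, ∀ᵐ ω ∂μ, |Y t a ω| ≤ C_Y)
    -- a measurable weight ᾱ with values in (0,1) and bounded ratio π^e/ᾱ
    (αbar : Fin K → 𝒳 → ℝ)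
    (hαmeas : ∀ a, Measurable (αbar a))
    (hαrange : ∀ a x, αbar a x ∈ Set.Ioo (0:ℝ) 1)
    (C_α : ℝ) (hCα : ∀ a x, |πe a x / αbar a x| ≤ C_α)
 :
    -- conclusion: E[Z_t | Ω_{t-1}] = 0 almost surely, for every t
    ∀ t, μ[(fun ω =>
        (∑ a, (πe a (X t ω) * (if A t ω = a then (1:ℝ) else 0) *
            (Y t a ω - fstar a (X t ω)) / αbar a (X t ω)
          + πe a (X t ω) * fstar a (X t ω))) - Rval) | ℱ t]
      =ᵐ[μ] fun _ => 0 := by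
  intro t
  -- notation
  have hmle : (ℱ t : MeasurableSpace Ω) ≤ mΩ := ℱ.le t
  have hm2le : MeasurableSpace.comap (X t) mX ≤ mΩ := (hXmeas t).comap_le
  have hJle : (ℱ t : MeasurableSpace Ω) ⊔ MeasurableSpace.comap (X t) mX ≤ mΩ :=
    sup_le hmle hm2le
  haveI : SigmaFinite (μ.trim hmle) := sigmaFiniteTrim_mono _ le_rfl
  haveI : SigmaFinite (μ.trim hm2le) := sigmaFiniteTrim_mono _ le_rfl
  haveI : SigmaFinite (μ.trim hJle) := sigmaFiniteTrim_mono _ le_rfl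
  -- basic facts
  have hCY0 : 0 ≤ C_Y := by
    obtain ⟨ω, hω⟩ := (hYbdd t ⟨0, hK⟩).exists
    exact le_trans (abs_nonneg _) hω
  have hmXcomp : ∀ (h : 𝒳 → ℝ), Measurable h →
      Measurable[MeasurableSpace.comap (X t) mX] fun ω => h (X t ω) :=
    fun h hh => hh.comp (measurable_iff_comap_le.mpr le_rfl)
  -- measurability of pieces
  have hImeas : ∀ a : Fin K, Measurable[mΩ] fun ω => (if A t ω = a then (1:ℝ) else 0) := by
    intro a
    have hs : MeasurableSet[mΩ] {ω | A t ω = a} := (hAmeas t) (measurableSet_singleton a)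
    exact Measurable.ite hs measurable_const measurable_const
  have hfXmeas : ∀ a : Fin K, Measurable[mΩ] fun ω => fstar a (X t ω) :=
    fun a => (hfstarmeas a).comp (hXmeas t)
  -- a.e. bound on fstar ∘ X
  have hfbd : ∀ a : Fin K, ∀ᵐ ω ∂μ, |fstar a (X t ω)| ≤ C_Y := by
    intro a
    have h1 : ∀ᵐ ω ∂μ, |Y t a ω| ≤ (C_Y.toNNReal : ℝ) := by
      filter_upwards [hYbdd t a] with ω h
      rwa [Real.coe_toNNReal _ hCY0]
    have h2 := ae_bdd_condExp_of_ae_bdd (m := MeasurableSpace.comap (X t) mX) (μ := μ) h1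
    filter_upwards [h2, hfstarcond t a] with ω h2ω hcondω
    rw [hcondω, Real.coe_toNNReal _ hCY0] at h2ω
    exact h2ω
  -- integrability from a.e. bounds
  have intOfBdd : ∀ (f : Ω → ℝ) (C : ℝ), AEStronglyMeasurable f μ →
      (∀ᵐ ω ∂μ, |f ω| ≤ C) → Integrable f μ := by
    intro f C hf hb
    refine Integrable.mono' (integrable_const C) hf ?_
    filter_upwards [hb] with ω h
    rwa [Real.norm_eq_abs]
  -- the three pieces of Z
  set g : Fin K → Ω → ℝ := fun a ω => πe a (X t ω) / αbar a (X t ω) with hgdef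
  set q : Fin K → Ω → ℝ :=
    fun a ω => (if A t ω = a then (1:ℝ) else 0) * (Y t a ω - fstar a (X t ω)) with hqdef
  have hgm2 : ∀ a, Measurable[MeasurableSpace.comap (X t) mX] (g a) :=
    fun a => hmXcomp _ ((hπemeas a).div (hαmeas a))
  have hgmeas : ∀ a, Measurable[mΩ] (g a) := fun a => (hgm2 a).mono hm2le le_rfl
  have hqmeas : ∀ a, Measurable[mΩ] (q a) :=
    fun a => (hImeas a).mul ((hYmeas t a).sub (hfXmeas a))
  have hqbd : ∀ a, ∀ᵐ ω ∂μ, |q a ω| ≤ C_Y + C_Y := by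
    intro a
    filter_upwards [hYbdd t a, hfbd a] with ω h1 h2
    have habs : |q a ω| = |(if A t ω = a then (1:ℝ) else 0)| * |Y t a ω - fstar a (X t ω)| :=
      abs_mul _ _
    rw [habs]
    have hI : |(if A t ω = a then (1:ℝ) else 0)| ≤ 1 := by
      split <;> simp
    calc |(if A t ω = a then (1:ℝ) else 0)| * |Y t a ω - fstar a (X t ω)|
        ≤ 1 * |Y t a ω - fstar a (X t ω)| :=
          mul_le_mul_of_nonneg_right hI (abs_nonneg _)
      _ = |Y t a ω - fstar a (X t ω)| := one_mul _
      _ ≤ |Y t a ω| + |fstar a (X t ω)| := abs_sub _ _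
      _ ≤ C_Y + C_Y := add_le_add h1 h2
  have hqint : ∀ a, Integrable (q a) μ :=
    fun a => intOfBdd _ _ (hqmeas a).aestronglyMeasurable (hqbd a)
  have hgqint : ∀ a, Integrable (g a * q a) μ := by
    intro a
    refine intOfBdd _ (C_α * (C_Y + C_Y)) ((hgmeas a).mul (hqmeas a)).aestronglyMeasurable ?_
    filter_upwards [hqbd a] with ω h
    rw [Pi.mul_apply, abs_mul]
    exact mul_le_mul (hCα a (X t ω)) h (abs_nonneg _)
      (le_trans (abs_nonneg _) (hCα a (X t ω)))
  -- Step 1: conditional expectation of each IPW term given the join is 0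
  have hstep1 : ∀ a,
      μ[g a * q a | (ℱ t : MeasurableSpace Ω) ⊔ MeasurableSpace.comap (X t) mX]
        =ᵐ[μ] fun _ => 0 := by
    intro a
    have hpull := condExp_mul_of_stronglyMeasurable_left
      (m := (ℱ t : MeasurableSpace Ω) ⊔ MeasurableSpace.comap (X t) mX) (μ := μ)
      ((hgm2 a).stronglyMeasurable.mono le_sup_right) (hgqint a) (hqint a)
    refine hpull.trans ?_
    filter_upwards [hunconf t a] with ω hω
    simp only [Pi.mul_apply]
    have hz : (μ[q a | (ℱ t : MeasurableSpace Ω) ⊔ MeasurableSpace.comap (X t) mX]) ω = 0 := hω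
    rw [hz, mul_zero]
  -- Step 2: by the tower property, conditional on ℱ t it is also 0
  have hstep2 : ∀ a, μ[g a * q a | (ℱ t : MeasurableSpace Ω)] =ᵐ[μ] fun _ => 0 := by
    intro a
    have htower := condExp_condExp_of_le (μ := μ) (f := g a * q a)
      (le_sup_left : (ℱ t : MeasurableSpace Ω) ≤ (ℱ t : MeasurableSpace Ω) ⊔ MeasurableSpace.comap (X t) mX) hJle
    have h0 : μ[μ[g a * q a | (ℱ t : MeasurableSpace Ω) ⊔ MeasurableSpace.comap (X t) mX] | (ℱ t : MeasurableSpace Ω)]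
        =ᵐ[μ] μ[(fun _ => (0:ℝ)) | (ℱ t : MeasurableSpace Ω)] :=
      condExp_congr_ae (hstep1 a)
    have hz : μ[(fun _ => (0:ℝ)) | (ℱ t : MeasurableSpace Ω)] = fun _ => 0 := condExp_zero
    exact htower.symm.trans (h0.trans (by rw [hz]))
  -- Step 3: the regression term has conditional expectation Rval
  set G : Ω → ℝ := fun ω => ∑ a, πe a (X t ω) * fstar a (X t ω) with hGdef
  have hGm2 : Measurable[MeasurableSpace.comap (X t) mX] G := by
    refine hmXcomp (fun x => ∑ a, πe a x * fstar a x) ?_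
    exact Finset.measurable_sum _ (fun a _ => (hπemeas a).mul (hfstarmeas a))
  have hGmeas : Measurable[mΩ] G := hGm2.mono hm2le le_rfl
  have hGbd : ∀ᵐ ω ∂μ, |G ω| ≤ (K : ℝ) * (Cπe * C_Y) := by
    have hall : ∀ᵐ ω ∂μ, ∀ a : Fin K, |fstar a (X t ω)| ≤ C_Y := ae_all_iff.mpr hfbd
    filter_upwards [hall] with ω hω
    calc |G ω| ≤ ∑ a, |πe a (X t ω) * fstar a (X t ω)| := Finset.abs_sum_le_sum_abs _ _
      _ ≤ ∑ _a : Fin K, Cπe * C_Y := by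
          refine Finset.sum_le_sum fun a _ => ?_
          rw [abs_mul]
          exact mul_le_mul (hπebdd a (X t ω)) (hω a) (abs_nonneg _)
            (le_trans (abs_nonneg _) (hπebdd a (X t ω)))
      _ = (K : ℝ) * (Cπe * C_Y) := by simp [Finset.sum_const, Finset.card_univ]
  have hGint : Integrable G μ := intOfBdd _ _ hGmeas.aestronglyMeasurable hGbd
  have hstep3 : μ[G | (ℱ t : MeasurableSpace Ω)] =ᵐ[μ] fun _ => Rval := by
    have hind := condExp_indep_eq (μ := μ) hm2le hmle hGm2.stronglyMeasurable (hXindep t)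
    refine hind.trans ?_
    have hRv : μ[G] = Rval := by
      rw [hR, ← hXlaw t,
        integral_map (hXmeas t).aemeasurable
          ((Finset.measurable_sum (f := fun a x => πe a x * fstar a x) _
            (fun a _ => (hπemeas a).mul (hfstarmeas a))).aestronglyMeasurable)]
    rw [hRv]
  -- put things together
  set F : Ω → ℝ := fun ω => ∑ a, (g a * q a) ω with hFdef
  have heqF : F = ∑ a, (g a * q a) := by
    funext ω; simp [hFdef, Finset.sum_apply]
  have hFint : Integrable F μ := by
    rw [heqF]
    exact (integrable_finset_sum Finset.univ (fun a _ => hgqint a)).congr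
      (Filter.EventuallyEq.of_eq (by funext ω; simp [Finset.sum_apply]))
  have hFcond : μ[F | (ℱ t : MeasurableSpace Ω)] =ᵐ[μ] fun _ => 0 := by
    rw [heqF]
    have hsum := condExp_finsetSum (m := (ℱ t : MeasurableSpace Ω)) (μ := μ)
      (s := Finset.univ) (f := fun a => g a * q a) (fun a _ => hgqint a)
    refine hsum.trans ?_
    have hall : ∀ᵐ ω ∂μ, ∀ a : Fin K, (μ[g a * q a | (ℱ t : MeasurableSpace Ω)]) ω = 0 :=
      ae_all_iff.mpr (fun a => hstep2 a)
    filter_upwards [hall] with ω hω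
    simp only [Finset.sum_apply]
    exact Finset.sum_eq_zero fun a _ => hω a
  -- rewrite the target function
  have hZeq : (fun ω =>
        (∑ a, (πe a (X t ω) * (if A t ω = a then (1:ℝ) else 0) *
            (Y t a ω - fstar a (X t ω)) / αbar a (X t ω)
          + πe a (X t ω) * fstar a (X t ω))) - Rval)
      = fun ω => F ω + G ω - Rval := by
    funext ω
    simp only [hFdef, hGdef, hgdef, hqdef, Pi.mul_apply, Finset.sum_apply, Pi.sub_apply]
    rw [← Finset.sum_add_distrib]
    congr 1
    refine Finset.sum_congr rfl fun a _ => ?_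
    ring
  rw [hZeq]
  have hsplit : μ[(fun ω => F ω + G ω - Rval) | (ℱ t : MeasurableSpace Ω)]
      =ᵐ[μ] μ[(fun ω => F ω + G ω) | (ℱ t : MeasurableSpace Ω)]
        - μ[(fun _ => Rval) | (ℱ t : MeasurableSpace Ω)] :=
    condExp_sub (hFint.add hGint) (integrable_const _) _
  have hadd : μ[(fun ω => F ω + G ω) | (ℱ t : MeasurableSpace Ω)]
      =ᵐ[μ] μ[F | (ℱ t : MeasurableSpace Ω)] + μ[G | (ℱ t : MeasurableSpace Ω)] :=
    condExp_add hFint hGint _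
  have hconst : μ[(fun _ => Rval) | (ℱ t : MeasurableSpace Ω)] = fun _ => Rval :=
    condExp_const hmle _
  refine hsplit.trans ?_
  rw [hconst]
  filter_upwards [hadd, hFcond, hstep3] with ω h1 h2 h3
  simp only [Pi.sub_apply, Pi.add_apply] at *
  rw [h1, h2, h3]
  ring
end
end

section
/- Define Γ_t(a) = π^e(a∣X_t) 1[A_t = a] (Y_t(a) − f*(a,X_t)) / ᾱ(a∣X_t) + π^e(a∣X_t) f*(a,X_t) and Z_t = Σ_{a=1}^K Γ_t(a) − R(π^e), where ᾱ : 𝒜 × 𝒳 → (0,1) is measurable with |π^e(a∣x)/ᾱ(a∣x)| bounded. Then the second moment of Z_t equals E[Z_t²] = E[ Σ_{a=1}^K (π^e(a∣X_t))² π_t(a∣X_t, Ω_{t-1}) v*(a,X_t) / ᾱ(a∣X_t)² + ( Σ_{a=1}^K π^e(a∣X_t) f*(a,X_t) − R(π^e) )² ]. -/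
open MeasureTheory ProbabilityTheory Filter
open scoped NNReal ENNReal Topology

noncomputable section

/-- a.e.-bounded real function -/
def AeBdd {Ω : Type*} {mΩ' : MeasurableSpace Ω} (μ : Measure Ω) (f : Ω → ℝ) : Prop :=
  ∃ C : ℝ, ∀ᵐ ω ∂μ, |f ω| ≤ C

namespace AeBdd

variable {Ω : Type*} {mΩ' : MeasurableSpace Ω} {μ : Measure Ω} {f g : Ω → ℝ}

theorem of_forall {C : ℝ} (h : ∀ ω, |f ω| ≤ C) : AeBdd μ f :=
  ⟨C, Filter.Eventually.of_forall h⟩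

theorem mul (hf : AeBdd μ f) (hg : AeBdd μ g) : AeBdd μ (fun ω => f ω * g ω) := by
  obtain ⟨Cf, hCf⟩ := hf
  obtain ⟨Cg, hCg⟩ := hg
  refine ⟨|Cf| * |Cg|, ?_⟩
  filter_upwards [hCf, hCg] with ω h1 h2
  rw [abs_mul]
  exact mul_le_mul (h1.trans (le_abs_self _)) (h2.trans (le_abs_self _)) (abs_nonneg _)
    (abs_nonneg _)

theorem add (hf : AeBdd μ f) (hg : AeBdd μ g) : AeBdd μ (fun ω => f ω + g ω) := by
  obtain ⟨Cf, hCf⟩ := hf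
  obtain ⟨Cg, hCg⟩ := hg
  refine ⟨Cf + Cg, ?_⟩
  filter_upwards [hCf, hCg] with ω h1 h2
  exact (abs_add_le _ _).trans (add_le_add h1 h2)

theorem sub (hf : AeBdd μ f) (hg : AeBdd μ g) : AeBdd μ (fun ω => f ω - g ω) := by
  obtain ⟨Cf, hCf⟩ := hf
  obtain ⟨Cg, hCg⟩ := hg
  refine ⟨Cf + Cg, ?_⟩
  filter_upwards [hCf, hCg] with ω h1 h2
  exact (abs_sub _ _).trans (add_le_add h1 h2)

theorem const (c : ℝ) : AeBdd μ (fun _ => c) := ⟨|c|, Filter.Eventually.of_forall fun _ => le_rfl⟩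

theorem sq (hf : AeBdd μ f) : AeBdd μ (fun ω => f ω ^ 2) := by
  obtain ⟨Cf, hCf⟩ := hf
  refine ⟨|Cf| ^ 2, ?_⟩
  filter_upwards [hCf] with ω h1
  rw [abs_pow]
  exact pow_le_pow_left₀ (abs_nonneg _) (h1.trans (le_abs_self _)) 2

theorem finsetSum {ι : Type*} (s : Finset ι) {F : ι → Ω → ℝ}
    (h : ∀ i ∈ s, AeBdd μ (F i)) : AeBdd μ (fun ω => ∑ i ∈ s, F i ω) := by
  classical
  induction s using Finset.induction_on with
  | empty => simpa using const (μ := μ) 0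
  | @insert a s' hx ih =>
    simp only [Finset.sum_insert hx]
    exact (h a (Finset.mem_insert_self a s')).add
      (ih fun i hi => h i (Finset.mem_insert_of_mem hi))

theorem integrable [IsFiniteMeasure μ] (hf : AeBdd μ f)
    (hm : AEStronglyMeasurable f μ) : Integrable f μ := by
  obtain ⟨C, hC⟩ := hf
  exact Integrable.mono' (integrable_const C) hm (by simpa [Real.norm_eq_abs] using hC)

end AeBdd

/-- pull-out lemma for conditional expectations, in integral form -/
theorem pull_out_int {Ω : Type*} [mΩ : MeasurableSpace Ω] {μ : Measure Ω} [IsProbabilityMeasure μ]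
    {m : MeasurableSpace Ω} (hm : m ≤ mΩ) {f g h : Ω → ℝ}
    (hfm : Measurable[m] f) (hfb : AeBdd μ f)
    (hg : Integrable g μ)
    (hgh : μ[g|m] =ᵐ[μ] h) :
    ∫ ω, f ω * g ω ∂μ = ∫ ω, f ω * h ω ∂μ := by
  obtain ⟨c, hc⟩ := hfb
  have h1 : μ[f * g|m] =ᵐ[μ] f * μ[g|m] :=
    condExp_stronglyMeasurable_mul_of_bound hm hfm.stronglyMeasurable hg c
      (by simpa [Real.norm_eq_abs] using hc)
  have h2 : μ[f * g|m] =ᵐ[μ] fun ω => f ω * h ω :=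
    h1.trans (hgh.mono fun ω hω => by simp [Pi.mul_apply, hω])
  calc ∫ ω, f ω * g ω ∂μ = ∫ ω, (f * g) ω ∂μ := rfl
    _ = ∫ ω, (μ[f * g|m]) ω ∂μ := (integral_condExp hm).symm
    _ = ∫ ω, f ω * h ω ∂μ := integral_congr_ae h2

theorem score_second_moment
    {Ω : Type*} [mΩ : MeasurableSpace Ω] (μ : Measure Ω) [IsProbabilityMeasure μ]
    {𝒳 : Type*} [mX : MeasurableSpace 𝒳]
    {K : ℕ} (hK : 0 < K)
    (ℱ : MeasureTheory.Filtration ℕ mΩ)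
    (X : ℕ → Ω → 𝒳) (A : ℕ → Ω → Fin K) (Y : ℕ → Fin K → Ω → ℝ)
    (ν : Measure 𝒳) [IsProbabilityMeasure ν]
    (πpol : ℕ → Fin K → 𝒳 → Ω → ℝ)
    (πe : Fin K → 𝒳 → ℝ) (fstar : Fin K → 𝒳 → ℝ)
    (Rval : ℝ)
    -- measurability and adaptedness of the data-generating process
    (hXmeas : ∀ t, Measurable (X t))
    (hAmeas : ∀ t, Measurable (A t))
    (hYmeas : ∀ t a, Measurable (Y t a))
    (hXadapt : ∀ t, Measurable[ℱ (t+1)] (X t))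
    (hAadapt : ∀ t, Measurable[ℱ (t+1)] (A t))
    (hYadapt : ∀ t a, Measurable[ℱ (t+1)] (Y t a))
    (hπemeas : ∀ a, Measurable (πe a))
    (hfstarmeas : ∀ a, Measurable (fstar a))
    (Cπe : ℝ) (hπebdd : ∀ a x, |πe a x| ≤ Cπe)
    -- the covariates are i.i.d. with law ν and independent of the past
    (hXlaw : ∀ t, μ.map (X t) = ν)
    (hXindep : ∀ t, ProbabilityTheory.Indep (MeasurableSpace.comap (X t) mX) (ℱ t) μ)
    -- the logging policy is a function of the history only
    (hπpolmeas : ∀ t a x, Measurable[ℱ t] (πpol t a x))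
    (hπpoljm : ∀ t a, Measurable fun p : 𝒳 × Ω => πpol t a p.1 p.2)
    (hπpolrange : ∀ t a x ω, πpol t a x ω ∈ Set.Icc (0:ℝ) 1)
    -- P(A_t = a | X_t, Ω_{t-1}) = π_t(a | X_t, Ω_{t-1})
    (hpolicy : ∀ t a,
      μ[(fun ω => if A t ω = a then (1:ℝ) else 0) | ℱ t ⊔ MeasurableSpace.comap (X t) mX]
        =ᵐ[μ] fun ω => πpol t a (X t ω) ω)
    -- conditional mean of the potential outcomes, time-invariant
    (hfstarcond : ∀ t a,
      μ[Y t a | MeasurableSpace.comap (X t) mX] =ᵐ[μ] fun ω => fstar a (X t ω))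
    -- unconfoundedness: A_t ⫫ Y_t(a) given (X_t, Ω_{t-1})
    (hunconf : ∀ t a,
      μ[(fun ω => (if A t ω = a then (1:ℝ) else 0) * (Y t a ω - fstar a (X t ω)))
          | ℱ t ⊔ MeasurableSpace.comap (X t) mX] =ᵐ[μ] fun _ => 0)
    -- the mean outcome R(π^e) = E[Σ_a π^e(a|X) Y(a)]
    (hR : Rval = ∫ x, (∑ a, πe a x * fstar a x) ∂ν)
    -- Assumption 1: bounded potential outcomes
    (C_Y : ℝ) (hYbdd : ∀ t a, ∀ᵐ ω ∂μ, |Y t a ω| ≤ C_Y)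
    -- conditional variance of the potential outcomes
    (vstar : Fin K → 𝒳 → ℝ)
    (hvstarmeas : ∀ a, Measurable (vstar a))
    (hvstarcond : ∀ t a,
      μ[(fun ω => (Y t a ω - fstar a (X t ω))^2) | MeasurableSpace.comap (X t) mX]
        =ᵐ[μ] fun ω => vstar a (X t ω))
    (hunconf2 : ∀ t a,
      μ[(fun ω => (if A t ω = a then (1:ℝ) else 0) * (Y t a ω - fstar a (X t ω))^2)
          | ℱ t ⊔ MeasurableSpace.comap (X t) mX]
        =ᵐ[μ] fun ω => πpol t a (X t ω) ω * vstar a (X t ω))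
    -- a measurable weight ᾱ with values in (0,1) and bounded ratio π^e/ᾱ
    (αbar : Fin K → 𝒳 → ℝ)
    (hαmeas : ∀ a, Measurable (αbar a))
    (hαrange : ∀ a x, αbar a x ∈ Set.Ioo (0:ℝ) 1)
    (C_α : ℝ) (hCα : ∀ a x, |πe a x / αbar a x| ≤ C_α)
 :
    -- conclusion: the second moment identity for Z_t
    ∀ t, ∫ ω, ((∑ a, (πe a (X t ω) * (if A t ω = a then (1:ℝ) else 0) *
            (Y t a ω - fstar a (X t ω)) / αbar a (X t ω)
          + πe a (X t ω) * fstar a (X t ω))) - Rval)^2 ∂μ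
      = ∫ ω, (∑ a, (πe a (X t ω))^2 * πpol t a (X t ω) ω * vstar a (X t ω) /
            (αbar a (X t ω))^2
          + (∑ a, πe a (X t ω) * fstar a (X t ω) - Rval)^2) ∂μ := by
  intro t
  classical
  -- σ-algebra setup
  have hm : (ℱ t ⊔ MeasurableSpace.comap (X t) mX) ≤ mΩ :=
    sup_le (ℱ.le t) (hXmeas t).comap_le
  have hXcm : Measurable[MeasurableSpace.comap (X t) mX] (X t) :=
    Measurable.of_comap_le le_rfl
  have hcompm : ∀ {g : 𝒳 → ℝ}, Measurable g →
      Measurable[ℱ t ⊔ MeasurableSpace.comap (X t) mX] (fun ω => g (X t ω)) :=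
    fun hg => (hg.comp hXcm).mono le_sup_right le_rfl
  -- nonnegativity of C_Y
  have haeNe : (MeasureTheory.ae μ).NeBot := ae_neBot.2 (IsProbabilityMeasure.ne_zero μ)
  have hCY0 : 0 ≤ C_Y := by
    obtain ⟨ω0, hω0⟩ := (hYbdd t ⟨0, hK⟩).exists
    exact (abs_nonneg _).trans hω0
  -- a.e. bound on fstar ∘ X
  have hfb : ∀ a, ∀ᵐ ω ∂μ, |fstar a (X t ω)| ≤ C_Y := by
    intro a
    have h1 : ∀ᵐ ω ∂μ, |Y t a ω| ≤ ((⟨C_Y, hCY0⟩ : ℝ≥0) : ℝ) := hYbdd t a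
    have h2 := ae_bdd_condExp_of_ae_bdd (m := MeasurableSpace.comap (X t) mX) h1
    filter_upwards [h2, hfstarcond t a] with ω hb he
    rw [← he]
    exact hb
  -- a.e. bound on vstar ∘ X
  have hvb : ∀ a, ∀ᵐ ω ∂μ, |vstar a (X t ω)| ≤ (2 * C_Y) ^ 2 := by
    intro a
    have h1 : ∀ᵐ ω ∂μ, |(Y t a ω - fstar a (X t ω)) ^ 2|
        ≤ ((⟨(2 * C_Y) ^ 2, by positivity⟩ : ℝ≥0) : ℝ) := by
      filter_upwards [hYbdd t a, hfb a] with ω h1 h2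
      show |(Y t a ω - fstar a (X t ω)) ^ 2| ≤ (2 * C_Y) ^ 2
      rw [abs_pow]
      refine pow_le_pow_left₀ (abs_nonneg _) ?_ 2
      calc |Y t a ω - fstar a (X t ω)| ≤ |Y t a ω| + |fstar a (X t ω)| := abs_sub _ _
        _ ≤ C_Y + C_Y := add_le_add h1 h2
        _ = 2 * C_Y := by ring
    have h2 := ae_bdd_condExp_of_ae_bdd (m := MeasurableSpace.comap (X t) mX) h1
    filter_upwards [h2, hvstarcond t a] with ω hb he
    rw [← he]
    exact hb
  -- a.e. boundedness facts
  have bY : ∀ a, AeBdd μ (Y t a) := fun a => ⟨C_Y, hYbdd t a⟩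
  have bf : ∀ a, AeBdd μ (fun ω => fstar a (X t ω)) := fun a => ⟨C_Y, hfb a⟩
  have bε : ∀ a, AeBdd μ (fun ω => Y t a ω - fstar a (X t ω)) := fun a => (bY a).sub (bf a)
  have bind : ∀ a, AeBdd μ (fun ω => if A t ω = a then (1:ℝ) else 0) := fun a =>
    AeBdd.of_forall (C := 1) (fun ω => by split <;> simp)
  have bw : ∀ a, AeBdd μ (fun ω => πe a (X t ω) / αbar a (X t ω)) := fun a =>
    AeBdd.of_forall (fun ω => hCα a _)
  have bπe : ∀ a, AeBdd μ (fun ω => πe a (X t ω)) := fun a =>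
    AeBdd.of_forall (fun ω => hπebdd a _)
  have bπp : ∀ a, AeBdd μ (fun ω => πpol t a (X t ω) ω) := fun a =>
    AeBdd.of_forall (C := 1) (fun ω => abs_le.2
      ⟨by linarith [(hπpolrange t a (X t ω) ω).1], (hπpolrange t a (X t ω) ω).2⟩)
  have bv : ∀ a, AeBdd μ (fun ω => vstar a (X t ω)) := fun a => ⟨(2 * C_Y) ^ 2, hvb a⟩
  have bD : AeBdd μ (fun ω => (∑ b, πe b (X t ω) * fstar b (X t ω)) - Rval) :=
    (AeBdd.finsetSum Finset.univ (fun b _ => (bπe b).mul (bf b))).sub (AeBdd.const Rval)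
  -- measurability facts
  have mind : ∀ a, Measurable (fun ω => if A t ω = a then (1:ℝ) else 0) := fun a =>
    Measurable.ite ((hAmeas t) (measurableSet_singleton a)) measurable_const measurable_const
  have mε : ∀ a, Measurable (fun ω => Y t a ω - fstar a (X t ω)) := fun a =>
    (hYmeas t a).sub ((hfstarmeas a).comp (hXmeas t))
  have mw : ∀ a, Measurable (fun ω => πe a (X t ω) / αbar a (X t ω)) := fun a =>
    ((hπemeas a).comp (hXmeas t)).div ((hαmeas a).comp (hXmeas t))
  have mπp : ∀ a, Measurable (fun ω => πpol t a (X t ω) ω) := fun a =>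
    (hπpoljm t a).comp ((hXmeas t).prodMk measurable_id)
  have mv : ∀ a, Measurable (fun ω => vstar a (X t ω)) := fun a =>
    (hvstarmeas a).comp (hXmeas t)
  have mD : Measurable (fun ω => (∑ b, πe b (X t ω) * fstar b (X t ω)) - Rval) :=
    (Finset.measurable_sum Finset.univ fun b _ =>
      ((hπemeas b).comp (hXmeas t)).mul ((hfstarmeas b).comp (hXmeas t))).sub measurable_const
  -- ℱ t ⊔ comap-measurability of the pulled-out factors
  have mwm : ∀ a, Measurable[ℱ t ⊔ MeasurableSpace.comap (X t) mX]
      (fun ω => πe a (X t ω) / αbar a (X t ω)) := fun a =>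
    hcompm ((hπemeas a).div (hαmeas a))
  have mDm : Measurable[ℱ t ⊔ MeasurableSpace.comap (X t) mX]
      (fun ω => (∑ b, πe b (X t ω) * fstar b (X t ω)) - Rval) :=
    hcompm ((Finset.measurable_sum Finset.univ fun b _ =>
      (hπemeas b).mul (hfstarmeas b)).sub measurable_const)
  -- integrability facts
  have ig1 : ∀ a, Integrable (fun ω =>
      (if A t ω = a then (1:ℝ) else 0) * (Y t a ω - fstar a (X t ω)) ^ 2) μ := fun a =>
    ((bind a).mul (bε a).sq).integrable (((mind a).mul ((mε a).pow_const 2)).aestronglyMeasurable)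
  have ig2 : ∀ a, Integrable (fun ω =>
      (if A t ω = a then (1:ℝ) else 0) * (Y t a ω - fstar a (X t ω))) μ := fun a =>
    ((bind a).mul (bε a)).integrable (((mind a).mul (mε a)).aestronglyMeasurable)
  have iq : ∀ a, Integrable (fun ω => (πe a (X t ω) / αbar a (X t ω)) ^ 2 *
      ((if A t ω = a then (1:ℝ) else 0) * (Y t a ω - fstar a (X t ω)) ^ 2)) μ := fun a =>
    ((bw a).sq.mul ((bind a).mul (bε a).sq)).integrable
      ((((mw a).pow_const 2).mul ((mind a).mul ((mε a).pow_const 2))).aestronglyMeasurable)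
  have ic : ∀ a, Integrable (fun ω =>
      ((πe a (X t ω) / αbar a (X t ω)) * ((∑ b, πe b (X t ω) * fstar b (X t ω)) - Rval)) *
      ((if A t ω = a then (1:ℝ) else 0) * (Y t a ω - fstar a (X t ω)))) μ := fun a =>
    (((bw a).mul bD).mul ((bind a).mul (bε a))).integrable
      ((((mw a).mul mD).mul ((mind a).mul (mε a))).aestronglyMeasurable)
  have ir : ∀ a, Integrable (fun ω => (πe a (X t ω) / αbar a (X t ω)) ^ 2 *
      (πpol t a (X t ω) ω * vstar a (X t ω))) μ := fun a =>
    ((bw a).sq.mul ((bπp a).mul (bv a))).integrable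
      ((((mw a).pow_const 2).mul ((mπp a).mul (mv a))).aestronglyMeasurable)
  have iD2 : Integrable (fun ω =>
      ((∑ b, πe b (X t ω) * fstar b (X t ω)) - Rval) ^ 2) μ :=
    bD.sq.integrable ((mD.pow_const 2).aestronglyMeasurable)
  -- pointwise algebraic identity
  have key : ∀ ω,
      ((∑ a, (πe a (X t ω) * (if A t ω = a then (1:ℝ) else 0) *
            (Y t a ω - fstar a (X t ω)) / αbar a (X t ω)
          + πe a (X t ω) * fstar a (X t ω))) - Rval) ^ 2
      = (∑ a, (πe a (X t ω) / αbar a (X t ω)) ^ 2 *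
            ((if A t ω = a then (1:ℝ) else 0) * (Y t a ω - fstar a (X t ω)) ^ 2))
        + 2 * (∑ a, ((πe a (X t ω) / αbar a (X t ω)) *
              ((∑ b, πe b (X t ω) * fstar b (X t ω)) - Rval)) *
            ((if A t ω = a then (1:ℝ) else 0) * (Y t a ω - fstar a (X t ω))))
        + ((∑ b, πe b (X t ω) * fstar b (X t ω)) - Rval) ^ 2 := by
    intro ω
    have hpick : ∀ g : Fin K → ℝ,
        (∑ a, (if A t ω = a then (1:ℝ) else 0) * g a) = g (A t ω) := by
      intro g
      simp [ite_mul]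
    have e0 : (∑ a, (πe a (X t ω) * (if A t ω = a then (1:ℝ) else 0) *
            (Y t a ω - fstar a (X t ω)) / αbar a (X t ω)
          + πe a (X t ω) * fstar a (X t ω)))
        = πe (A t ω) (X t ω) * (Y t (A t ω) ω - fstar (A t ω) (X t ω)) / αbar (A t ω) (X t ω)
          + (∑ b, πe b (X t ω) * fstar b (X t ω)) := by
      rw [Finset.sum_add_distrib]
      congr 1
      rw [← hpick (fun a => πe a (X t ω) * (Y t a ω - fstar a (X t ω)) / αbar a (X t ω))]
      exact Finset.sum_congr rfl fun a _ => by ring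
    have e1 : (∑ a, (πe a (X t ω) / αbar a (X t ω)) ^ 2 *
            ((if A t ω = a then (1:ℝ) else 0) * (Y t a ω - fstar a (X t ω)) ^ 2))
        = (πe (A t ω) (X t ω) / αbar (A t ω) (X t ω)) ^ 2 *
            (Y t (A t ω) ω - fstar (A t ω) (X t ω)) ^ 2 := by
      rw [← hpick (fun a => (πe a (X t ω) / αbar a (X t ω)) ^ 2 *
            (Y t a ω - fstar a (X t ω)) ^ 2)]
      exact Finset.sum_congr rfl fun a _ => by ring
    have e2 : (∑ a, ((πe a (X t ω) / αbar a (X t ω)) *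
              ((∑ b, πe b (X t ω) * fstar b (X t ω)) - Rval)) *
            ((if A t ω = a then (1:ℝ) else 0) * (Y t a ω - fstar a (X t ω))))
        = ((πe (A t ω) (X t ω) / αbar (A t ω) (X t ω)) *
              ((∑ b, πe b (X t ω) * fstar b (X t ω)) - Rval)) *
            (Y t (A t ω) ω - fstar (A t ω) (X t ω)) := by
      rw [← hpick (fun a => ((πe a (X t ω) / αbar a (X t ω)) *
              ((∑ b, πe b (X t ω) * fstar b (X t ω)) - Rval)) *
            (Y t a ω - fstar a (X t ω)))]
      exact Finset.sum_congr rfl fun a _ => by ring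
    rw [e0, e1, e2]
    ring
  -- the two conditional-expectation computations
  have hqa : ∀ a, ∫ ω, (πe a (X t ω) / αbar a (X t ω)) ^ 2 *
        ((if A t ω = a then (1:ℝ) else 0) * (Y t a ω - fstar a (X t ω)) ^ 2) ∂μ
      = ∫ ω, (πe a (X t ω) / αbar a (X t ω)) ^ 2 *
        (πpol t a (X t ω) ω * vstar a (X t ω)) ∂μ := fun a =>
    pull_out_int hm ((mwm a).pow_const 2) (bw a).sq (ig1 a) (hunconf2 t a)
  have hca : ∀ a, ∫ ω, ((πe a (X t ω) / αbar a (X t ω)) *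
          ((∑ b, πe b (X t ω) * fstar b (X t ω)) - Rval)) *
        ((if A t ω = a then (1:ℝ) else 0) * (Y t a ω - fstar a (X t ω))) ∂μ = 0 := by
    intro a
    have := pull_out_int hm ((mwm a).mul mDm) ((bw a).mul bD) (ig2 a) (hunconf t a)
    simpa using this
  -- assemble
  calc ∫ ω, ((∑ a, (πe a (X t ω) * (if A t ω = a then (1:ℝ) else 0) *
            (Y t a ω - fstar a (X t ω)) / αbar a (X t ω)
          + πe a (X t ω) * fstar a (X t ω))) - Rval) ^ 2 ∂μ
      = ∫ ω, ((∑ a, (πe a (X t ω) / αbar a (X t ω)) ^ 2 *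
            ((if A t ω = a then (1:ℝ) else 0) * (Y t a ω - fstar a (X t ω)) ^ 2))
        + 2 * (∑ a, ((πe a (X t ω) / αbar a (X t ω)) *
              ((∑ b, πe b (X t ω) * fstar b (X t ω)) - Rval)) *
            ((if A t ω = a then (1:ℝ) else 0) * (Y t a ω - fstar a (X t ω))))
        + ((∑ b, πe b (X t ω) * fstar b (X t ω)) - Rval) ^ 2) ∂μ :=
        integral_congr_ae (Filter.Eventually.of_forall key)
    _ = (∑ a, ∫ ω, (πe a (X t ω) / αbar a (X t ω)) ^ 2 *
            ((if A t ω = a then (1:ℝ) else 0) * (Y t a ω - fstar a (X t ω)) ^ 2) ∂μ)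
        + 2 * (∑ a, ∫ ω, ((πe a (X t ω) / αbar a (X t ω)) *
              ((∑ b, πe b (X t ω) * fstar b (X t ω)) - Rval)) *
            ((if A t ω = a then (1:ℝ) else 0) * (Y t a ω - fstar a (X t ω))) ∂μ)
        + ∫ ω, ((∑ b, πe b (X t ω) * fstar b (X t ω)) - Rval) ^ 2 ∂μ := by
        have hA1 : ∫ ω, ((∑ a, (πe a (X t ω) / αbar a (X t ω)) ^ 2 *
              ((if A t ω = a then (1:ℝ) else 0) * (Y t a ω - fstar a (X t ω)) ^ 2))
            + 2 * (∑ a, ((πe a (X t ω) / αbar a (X t ω)) *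
                ((∑ b, πe b (X t ω) * fstar b (X t ω)) - Rval)) *
              ((if A t ω = a then (1:ℝ) else 0) * (Y t a ω - fstar a (X t ω))))
            + ((∑ b, πe b (X t ω) * fstar b (X t ω)) - Rval) ^ 2) ∂μ
            = (∫ ω, ((∑ a, (πe a (X t ω) / αbar a (X t ω)) ^ 2 *
              ((if A t ω = a then (1:ℝ) else 0) * (Y t a ω - fstar a (X t ω)) ^ 2))
            + 2 * (∑ a, ((πe a (X t ω) / αbar a (X t ω)) *
                ((∑ b, πe b (X t ω) * fstar b (X t ω)) - Rval)) *
              ((if A t ω = a then (1:ℝ) else 0) * (Y t a ω - fstar a (X t ω))))) ∂μ)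
              + ∫ ω, ((∑ b, πe b (X t ω) * fstar b (X t ω)) - Rval) ^ 2 ∂μ :=
          integral_add ((integrable_finset_sum _ fun a _ => iq a).add
            ((integrable_finset_sum _ fun a _ => ic a).const_mul 2)) iD2
        have hA2 : ∫ ω, ((∑ a, (πe a (X t ω) / αbar a (X t ω)) ^ 2 *
              ((if A t ω = a then (1:ℝ) else 0) * (Y t a ω - fstar a (X t ω)) ^ 2))
            + 2 * (∑ a, ((πe a (X t ω) / αbar a (X t ω)) *
                ((∑ b, πe b (X t ω) * fstar b (X t ω)) - Rval)) *
              ((if A t ω = a then (1:ℝ) else 0) * (Y t a ω - fstar a (X t ω))))) ∂μ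
            = (∫ ω, (∑ a, (πe a (X t ω) / αbar a (X t ω)) ^ 2 *
              ((if A t ω = a then (1:ℝ) else 0) * (Y t a ω - fstar a (X t ω)) ^ 2)) ∂μ)
            + ∫ ω, 2 * (∑ a, ((πe a (X t ω) / αbar a (X t ω)) *
                ((∑ b, πe b (X t ω) * fstar b (X t ω)) - Rval)) *
              ((if A t ω = a then (1:ℝ) else 0) * (Y t a ω - fstar a (X t ω)))) ∂μ :=
          integral_add (integrable_finset_sum _ fun a _ => iq a)
            ((integrable_finset_sum _ fun a _ => ic a).const_mul 2)
        have hA3 : ∫ ω, (∑ a, (πe a (X t ω) / αbar a (X t ω)) ^ 2 *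
              ((if A t ω = a then (1:ℝ) else 0) * (Y t a ω - fstar a (X t ω)) ^ 2)) ∂μ
            = ∑ a, ∫ ω, (πe a (X t ω) / αbar a (X t ω)) ^ 2 *
              ((if A t ω = a then (1:ℝ) else 0) * (Y t a ω - fstar a (X t ω)) ^ 2) ∂μ :=
          integral_finset_sum _ fun a _ => iq a
        have hA4 : ∫ ω, 2 * (∑ a, ((πe a (X t ω) / αbar a (X t ω)) *
                ((∑ b, πe b (X t ω) * fstar b (X t ω)) - Rval)) *
              ((if A t ω = a then (1:ℝ) else 0) * (Y t a ω - fstar a (X t ω)))) ∂μ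
            = 2 * ∫ ω, (∑ a, ((πe a (X t ω) / αbar a (X t ω)) *
                ((∑ b, πe b (X t ω) * fstar b (X t ω)) - Rval)) *
              ((if A t ω = a then (1:ℝ) else 0) * (Y t a ω - fstar a (X t ω)))) ∂μ :=
          integral_const_mul 2 _
        have hA5 : ∫ ω, (∑ a, ((πe a (X t ω) / αbar a (X t ω)) *
                ((∑ b, πe b (X t ω) * fstar b (X t ω)) - Rval)) *
              ((if A t ω = a then (1:ℝ) else 0) * (Y t a ω - fstar a (X t ω)))) ∂μ
            = ∑ a, ∫ ω, ((πe a (X t ω) / αbar a (X t ω)) *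
                ((∑ b, πe b (X t ω) * fstar b (X t ω)) - Rval)) *
              ((if A t ω = a then (1:ℝ) else 0) * (Y t a ω - fstar a (X t ω))) ∂μ :=
          integral_finset_sum _ fun a _ => ic a
        rw [hA1, hA2, hA3, hA4, hA5]
    _ = (∑ a, ∫ ω, (πe a (X t ω) / αbar a (X t ω)) ^ 2 *
            (πpol t a (X t ω) ω * vstar a (X t ω)) ∂μ)
        + ∫ ω, ((∑ b, πe b (X t ω) * fstar b (X t ω)) - Rval) ^ 2 ∂μ := by
        rw [Finset.sum_congr rfl fun a _ => hqa a,
          Finset.sum_congr rfl fun a _ => hca a]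
        simp
    _ = ∫ ω, ((∑ a, (πe a (X t ω) / αbar a (X t ω)) ^ 2 *
            (πpol t a (X t ω) ω * vstar a (X t ω)))
        + ((∑ b, πe b (X t ω) * fstar b (X t ω)) - Rval) ^ 2) ∂μ := by
        have hB1 : ∫ ω, ((∑ a, (πe a (X t ω) / αbar a (X t ω)) ^ 2 *
              (πpol t a (X t ω) ω * vstar a (X t ω)))
            + ((∑ b, πe b (X t ω) * fstar b (X t ω)) - Rval) ^ 2) ∂μ
            = (∫ ω, (∑ a, (πe a (X t ω) / αbar a (X t ω)) ^ 2 *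
              (πpol t a (X t ω) ω * vstar a (X t ω))) ∂μ)
            + ∫ ω, ((∑ b, πe b (X t ω) * fstar b (X t ω)) - Rval) ^ 2 ∂μ :=
          integral_add (integrable_finset_sum _ fun a _ => ir a) iD2
        have hB2 : ∫ ω, (∑ a, (πe a (X t ω) / αbar a (X t ω)) ^ 2 *
              (πpol t a (X t ω) ω * vstar a (X t ω))) ∂μ
            = ∑ a, ∫ ω, (πe a (X t ω) / αbar a (X t ω)) ^ 2 *
              (πpol t a (X t ω) ω * vstar a (X t ω)) ∂μ :=
          integral_finset_sum _ fun a _ => ir a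
        rw [hB1, hB2]
    _ = ∫ ω, (∑ a, (πe a (X t ω))^2 * πpol t a (X t ω) ω * vstar a (X t ω) /
            (αbar a (X t ω))^2
          + (∑ a, πe a (X t ω) * fstar a (X t ω) - Rval)^2) ∂μ := by
        refine integral_congr_ae (Filter.Eventually.of_forall fun ω => ?_)
        have hsum : (∑ a, (πe a (X t ω) / αbar a (X t ω)) ^ 2 *
              (πpol t a (X t ω) ω * vstar a (X t ω)))
            = ∑ a, (πe a (X t ω))^2 * πpol t a (X t ω) ω * vstar a (X t ω) /
              (αbar a (X t ω))^2 :=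
          Finset.sum_congr rfl fun a _ => by ring
        simp only [hsum]
end
end
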